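/- Fix g > 0, h > 0 and u ∈ ℝ, and for ω ≠ 0 set S(h) = √(g h + ω²h²/4) and R±(h,u;ω) = u − ωh/2 ± (S(h) + (g/ω)·log(2g + ω²h + 2ω S(h))). Then lim_{ω→0, ω≠0} (R₊(h,u;ω) − (g/ω)·log(2g)) = u + 2√(g h) and lim_{ω→0, ω≠0} (R₋(h,u;ω) + (g/ω)·log(2g)) = u − 2√(g h). That is, in the irrotational limit the Riemann invariants of the vorticity-modified shallow water equations tend (after removal of the constant (g/ω)·log(2g)) to the classical Riemann invariants u ± 2√(gh). -/

import Mathlib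

open Real Filter Topology

/-- In the irrotational limit `ω → 0`, the Riemann invariants of the vorticity-modified
shallow water equations tend, after removal of the constant `(g/ω)log(2g)`, to the
classical Riemann invariants `u ± 2√(gh)`. -/
theorem riemann_invariants_irrotational_limit
    (g h u : ℝ) (hg : 0 < g) (hh : 0 < h)
    (S : ℝ → ℝ) (hS : ∀ ω : ℝ, S ω = Real.sqrt (g * h + ω ^ 2 * h ^ 2 / 4))
    (Rp Rm : ℝ → ℝ)
    (hRp : ∀ ω : ℝ, Rp ω
      = u - ω * h / 2 + (S ω + g / ω * Real.log (2 * g + ω ^ 2 * h + 2 * ω * S ω)))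
    (hRm : ∀ ω : ℝ, Rm ω
      = u - ω * h / 2 - (S ω + g / ω * Real.log (2 * g + ω ^ 2 * h + 2 * ω * S ω))) :
    Tendsto (fun ω : ℝ => Rp ω - g / ω * Real.log (2 * g)) (𝓝[≠] 0)
      (𝓝 (u + 2 * Real.sqrt (g * h))) ∧
    Tendsto (fun ω : ℝ => Rm ω + g / ω * Real.log (2 * g)) (𝓝[≠] 0)
      (𝓝 (u - 2 * Real.sqrt (g * h))) := by
  have hgne : g ≠ 0 := hg.ne'
  have hgh : 0 < g * h := mul_pos hg hh
  set F : ℝ → ℝ :=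
    fun ω => Real.log (2 * g + ω ^ 2 * h + 2 * ω * Real.sqrt (g * h + ω ^ 2 * h ^ 2 / 4))
    with hFdef
  have hA : HasDerivAt (fun ω : ℝ => g * h + ω ^ 2 * h ^ 2 / 4) 0 0 := by
    have := (((hasDerivAt_pow 2 (0 : ℝ)).mul_const (h ^ 2)).div_const 4).const_add (g * h)
    simpa using this
  have hsq : HasDerivAt (fun ω : ℝ => Real.sqrt (g * h + ω ^ 2 * h ^ 2 / 4)) 0 0 := by
    have h0 : (g * h + (0 : ℝ) ^ 2 * h ^ 2 / 4) ≠ 0 := by simpa using hgh.ne'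
    have := hA.sqrt h0
    simpa using this
  have hmul : HasDerivAt (fun ω : ℝ => 2 * ω * Real.sqrt (g * h + ω ^ 2 * h ^ 2 / 4))
      (2 * Real.sqrt (g * h)) 0 := by
    have h1 : HasDerivAt (fun ω : ℝ => 2 * ω) 2 0 := by
      simpa using (hasDerivAt_id (0 : ℝ)).const_mul 2
    have := h1.mul hsq
    simp at this
    exact this
  have hpoly : HasDerivAt (fun ω : ℝ => 2 * g + ω ^ 2 * h) 0 0 := by
    have := ((hasDerivAt_pow 2 (0 : ℝ)).mul_const h).const_add (2 * g)
    simpa using this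
  have hG : HasDerivAt
      (fun ω : ℝ => 2 * g + ω ^ 2 * h + 2 * ω * Real.sqrt (g * h + ω ^ 2 * h ^ 2 / 4))
      (2 * Real.sqrt (g * h)) 0 := by
    have := hpoly.add hmul
    simp at this
    exact this
  have hG0 : (2 * g + (0 : ℝ) ^ 2 * h +
      2 * 0 * Real.sqrt (g * h + (0 : ℝ) ^ 2 * h ^ 2 / 4)) ≠ 0 := by
    simp only [ne_eq, zero_pow, mul_zero, zero_mul, add_zero]
    positivity
  have hFd : HasDerivAt F (Real.sqrt (g * h) / g) 0 := by
    have h2 := hG.log hG0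
    have heq : 2 * Real.sqrt (g * h) / (2 * g + (0 : ℝ) ^ 2 * h +
        2 * 0 * Real.sqrt (g * h + (0 : ℝ) ^ 2 * h ^ 2 / 4)) = Real.sqrt (g * h) / g := by
      norm_num
      rw [mul_div_mul_left _ _ (two_ne_zero)]
    rw [heq] at h2
    exact h2
  have hslope : Tendsto (fun ω : ℝ => g * slope F 0 ω) (𝓝[≠] (0 : ℝ))
      (𝓝 (Real.sqrt (g * h))) := by
    have h1 := hasDerivAt_iff_tendsto_slope.mp hFd
    have h2 := h1.const_mul g
    have h3 : g * (Real.sqrt (g * h) / g) = Real.sqrt (g * h) := by field_simp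
    rwa [h3] at h2
  have hScont : Tendsto S (𝓝[≠] (0 : ℝ)) (𝓝 (Real.sqrt (g * h))) := by
    have hc : Continuous fun ω : ℝ => Real.sqrt (g * h + ω ^ 2 * h ^ 2 / 4) := by
      apply Real.continuous_sqrt.comp
      continuity
    have h1 : Tendsto (fun ω : ℝ => Real.sqrt (g * h + ω ^ 2 * h ^ 2 / 4)) (𝓝[≠] (0 : ℝ))
        (𝓝 (Real.sqrt (g * h + (0 : ℝ) ^ 2 * h ^ 2 / 4))) :=
      (hc.tendsto 0).mono_left nhdsWithin_le_nhds
    have heq : S = fun ω => Real.sqrt (g * h + ω ^ 2 * h ^ 2 / 4) := funext hS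
    rw [heq]
    simpa using h1
  have L1 : Tendsto (fun ω : ℝ => u - ω * h / 2) (𝓝[≠] (0 : ℝ)) (𝓝 u) := by
    have hc : Continuous fun ω : ℝ => u - ω * h / 2 := by continuity
    have h1 : Tendsto (fun ω : ℝ => u - ω * h / 2) (𝓝[≠] (0 : ℝ)) (𝓝 (u - 0 * h / 2)) :=
      (hc.tendsto 0).mono_left nhdsWithin_le_nhds
    simpa using h1
  have hF0 : F 0 = Real.log (2 * g) := by
    simp [hFdef]
  have hdiff : ∀ ω : ℝ, ω ≠ 0 → g * slope F 0 ω
      = g / ω * Real.log (2 * g + ω ^ 2 * h + 2 * ω * Real.sqrt (g * h + ω ^ 2 * h ^ 2 / 4))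
        - g / ω * Real.log (2 * g) := by
    intro ω hω
    rw [slope_def_field, hF0, sub_zero]
    simp only [hFdef]
    field_simp
  constructor
  · have key : ∀ᶠ ω in 𝓝[≠] (0 : ℝ),
        (u - ω * h / 2) + S ω + g * slope F 0 ω = Rp ω - g / ω * Real.log (2 * g) := by
      filter_upwards [self_mem_nhdsWithin] with ω hω
      have hω' : (ω : ℝ) ≠ 0 := hω
      rw [hRp ω, hS ω, hdiff ω hω']
      ring
    have T : Tendsto (fun ω : ℝ => (u - ω * h / 2) + S ω + g * slope F 0 ω)
        (𝓝[≠] (0 : ℝ)) (𝓝 (u + Real.sqrt (g * h) + Real.sqrt (g * h))) :=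
      (L1.add hScont).add hslope
    have hval : u + Real.sqrt (g * h) + Real.sqrt (g * h) = u + 2 * Real.sqrt (g * h) := by
      ring
    rw [hval] at T
    exact T.congr' key
  · have key : ∀ᶠ ω in 𝓝[≠] (0 : ℝ),
        (u - ω * h / 2) - S ω - g * slope F 0 ω = Rm ω + g / ω * Real.log (2 * g) := by
      filter_upwards [self_mem_nhdsWithin] with ω hω
      have hω' : (ω : ℝ) ≠ 0 := hω
      rw [hRm ω, hS ω, hdiff ω hω']
      ring
    have T : Tendsto (fun ω : ℝ => (u - ω * h / 2) - S ω - g * slope F 0 ω)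
        (𝓝[≠] (0 : ℝ)) (𝓝 (u - Real.sqrt (g * h) - Real.sqrt (g * h))) :=
      (L1.sub hScont).sub hslope
    have hval : u - Real.sqrt (g * h) - Real.sqrt (g * h) = u - 2 * Real.sqrt (g * h) := by
      ring
    rw [hval] at T
    exact T.congr' key
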